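/- Let A be a commutative ℂ-algebra equipped with a ℤ-grading 𝒜 making it a graded ℂ-algebra, let m be a nonzero integer, and let f ∈ A be homogeneous of degree m. Let ℓ, ℓ' ≥ 1 be integers with gcd(ℓ, m) = gcd(ℓ', m). Then the Laurent polynomial rings R_{f,ℓ}[U,U⁻¹] and R_{f,ℓ'}[U,U⁻¹] (i.e. LaurentPolynomial R_{f,ℓ} and LaurentPolynomial R_{f,ℓ'}) are isomorphic as ℂ-algebras. -/

import Mathlib

set_option synthInstance.maxHeartbeats 400000
set_option maxHeartbeats 1000000

open LaurentPolynomial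

noncomputable section LCyl

variable {S : Type*} [CommRing S] [Algebra ℂ S]

/-- `C` as a `ℂ`-algebra hom. -/
def CAlgHom {R : Type*} [CommRing R] [Algebra ℂ R] : R →ₐ[ℂ] LaurentPolynomial R :=
  { (C : R →+* LaurentPolynomial R) with
    commutes' := fun c => (LaurentPolynomial.algebraMap_apply c).symm }

@[simp] lemma CAlgHom_apply {R : Type*} [CommRing R] [Algebra ℂ R] (r : R) :
    (CAlgHom r : LaurentPolynomial R) = C r := rfl

/-- `T 1` as a unit. -/
def TUnit {R : Type*} [CommRing R] : (LaurentPolynomial R)ˣ where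
  val := T 1
  inv := T (-1)
  val_inv := by rw [← T_add]; norm_num
  inv_val := by rw [← T_add]; norm_num

/-- `T` as a monoid hom. -/
def THom {R : Type*} [CommRing R] : Multiplicative ℤ →* LaurentPolynomial R where
  toFun n := T (Multiplicative.toAdd n)
  map_one' := T_zero
  map_mul' a b := T_add _ _

lemma TUnit_zpow {R : Type*} [CommRing R] (n : ℤ) :
    ((TUnit ^ n : (LaurentPolynomial R)ˣ) : LaurentPolynomial R) = T n := by
  have h : (Units.coeHom (LaurentPolynomial R)).comp (zpowersHom _ TUnit) = THom := by
    apply MonoidHom.ext_mint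
    simp [THom, TUnit, zpowersHom]
  have h2 := DFunLike.congr_fun h (Multiplicative.ofAdd n)
  simpa [THom, zpowersHom] using h2

/-- `t ^ i * u ^ j` for a pair of units. -/
def Epow (t u : Sˣ) (v : ℤ × ℤ) : Sˣ := t ^ v.1 * u ^ v.2

lemma Epow_add (t u : Sˣ) (v w : ℤ × ℤ) :
    Epow t u (v + w) = Epow t u v * Epow t u w := by
  simp only [Epow, Prod.fst_add, Prod.snd_add, zpow_add]
  exact mul_mul_mul_comm _ _ _ _

lemma Epow_zsmul (t u : Sˣ) (n : ℤ) (v : ℤ × ℤ) :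
    Epow t u (n • v) = Epow t u v ^ n := by
  rcases v with ⟨i, j⟩
  show t ^ (n • i) * u ^ (n • j) = (t ^ i * u ^ j) ^ n
  rw [smul_eq_mul, smul_eq_mul, mul_zpow, ← zpow_mul, ← zpow_mul,
    mul_comm i n, mul_comm j n]

@[simp] lemma Epow_zero (t u : Sˣ) : Epow t u (0 : ℤ × ℤ) = 1 := by
  simp [Epow]

lemma map_Epow {S₂ : Type*} [CommRing S₂] (g : Sˣ →* S₂ˣ) (t u : Sˣ) (v : ℤ × ℤ) :
    g (Epow t u v) = Epow (g t) (g u) v := by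
  simp [Epow, map_mul, map_zpow]

section Twist

variable {A : Type*} [CommRing A] [Algebra ℂ A] (𝒜 : ℤ → Submodule ℂ A) [GradedAlgebra 𝒜]

/-- The twist of an algebra hom by a unit, as a ring hom. -/
def twistRH (φ : A →ₐ[ℂ] S) (u : Sˣ) : A →+* S :=
  (DirectSum.toSemiring
    (fun i => { toFun := fun x : 𝒜 i => φ x * ↑(u ^ i)
                map_zero' := by simp
                map_add' := fun x y => by simp [add_mul] })
    (by rw [AddMonoidHom.coe_mk, ZeroHom.coe_mk, SetLike.coe_gOne, map_one, zpow_zero,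
          Units.val_one, mul_one])
    (fun {i j} ai aj => by
      simp only [AddMonoidHom.coe_mk, ZeroHom.coe_mk]
      rw [SetLike.coe_gMul, map_mul, zpow_add, Units.val_mul]
      ring)).comp (DirectSum.decomposeAlgEquiv 𝒜).toAlgHom.toRingHom

lemma twistRH_of_mem (φ : A →ₐ[ℂ] S) (u : Sˣ) {k : ℤ} {x : A} (hx : x ∈ 𝒜 k) :
    twistRH 𝒜 φ u x = φ x * ↑(u ^ k) := by
  unfold twistRH
  rw [RingHom.comp_apply]
  have h : (DirectSum.decomposeAlgEquiv 𝒜).toAlgHom.toRingHom x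
      = DirectSum.of (fun i => 𝒜 i) k ⟨x, hx⟩ := by
    show DirectSum.decomposeAlgEquiv 𝒜 x = _
    rw [DirectSum.decomposeAlgEquiv_apply, DirectSum.decompose_of_mem 𝒜 hx]
  rw [h, DirectSum.toSemiring_of]; rfl

/-- The twist of an algebra hom by a unit. -/
def twistHom (φ : A →ₐ[ℂ] S) (u : Sˣ) : A →ₐ[ℂ] S :=
  { twistRH 𝒜 φ u with
    commutes' := fun c => by
      have h1 : algebraMap ℂ A c ∈ 𝒜 0 := by
        rw [Algebra.algebraMap_eq_smul_one]
        exact Submodule.smul_mem _ c SetLike.GradedOne.one_mem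
      show twistRH 𝒜 φ u (algebraMap ℂ A c) = algebraMap ℂ S c
      rw [twistRH_of_mem 𝒜 φ u h1, zpow_zero, Units.val_one, mul_one, AlgHom.commutes] }

lemma twistHom_of_mem (φ : A →ₐ[ℂ] S) (u : Sˣ) {k : ℤ} {x : A} (hx : x ∈ 𝒜 k) :
    twistHom 𝒜 φ u x = φ x * ↑(u ^ k) := twistRH_of_mem 𝒜 φ u hx

lemma ringHom_ext_homogeneous {S₂ : Type*} [CommRing S₂] {g₁ g₂ : A →+* S₂}
    (h : ∀ (k : ℤ) (x : A), x ∈ 𝒜 k → g₁ x = g₂ x) (x : A) : g₁ x = g₂ x := by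
  induction x using DirectSum.Decomposition.inductionOn 𝒜 with
  | zero => simp
  | homogeneous m => exact h _ _ m.2
  | add a b ha hb => rw [map_add, map_add, ha, hb]

end Twist

section LP

variable {B : Type*} [CommRing B] [Algebra ℂ B]

/-- Evaluation of a Laurent polynomial via a hom on coefficients and a unit for `T`. -/
def lpRH (ψ : B →+* S) (v : Sˣ) : LaurentPolynomial B →+* S :=
  AddMonoidAlgebra.liftNCRingHom ψ ((Units.coeHom S).comp (zpowersHom Sˣ v))
    (fun _ _ => Commute.all _ _)

lemma lpRH_C (ψ : B →+* S) (v : Sˣ) (x : B) : lpRH ψ v (C x) = ψ x := by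
  show AddMonoidAlgebra.liftNC _ _ (AddMonoidAlgebra.single (0 : ℤ) x) = ψ x
  rw [AddMonoidAlgebra.liftNC_single]
  simp [zpowersHom]

lemma lpRH_T (ψ : B →+* S) (v : Sˣ) (n : ℤ) : lpRH ψ v (T n) = ↑(v ^ n) := by
  show AddMonoidAlgebra.liftNC _ _ (AddMonoidAlgebra.single n (1 : B)) = _
  rw [AddMonoidAlgebra.liftNC_single]
  simp [zpowersHom]

/-- Evaluation of a Laurent polynomial, as an algebra hom. -/
def lpAH (ψ : B →ₐ[ℂ] S) (v : Sˣ) : LaurentPolynomial B →ₐ[ℂ] S :=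
  { lpRH (ψ : B →+* S) v with
    commutes' := fun c => by
      show lpRH (ψ : B →+* S) v (algebraMap ℂ (LaurentPolynomial B) c) = algebraMap ℂ S c
      rw [LaurentPolynomial.algebraMap_apply, lpRH_C]
      exact ψ.commutes c }

lemma lpAH_C (ψ : B →ₐ[ℂ] S) (v : Sˣ) (x : B) : lpAH ψ v (C x) = ψ x :=
  lpRH_C _ v x

lemma lpAH_T (ψ : B →ₐ[ℂ] S) (v : Sˣ) (n : ℤ) : lpAH ψ v (T n) = ↑(v ^ n) :=
  lpRH_T _ v n

end LP

end LCyl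

lemma exists_matrix (m ℓ ℓ' : ℤ) (hm : m ≠ 0)
    (hgcd : Int.gcd ℓ m = Int.gcd ℓ' m) :
    ∃ a b c d p q a' b' c' d' p' q' : ℤ,
      a*ℓ + p*m = ℓ' ∧ b*ℓ + q*m = 0 ∧
      a'*ℓ' + p'*m = ℓ ∧ b'*ℓ' + q'*m = 0 ∧
      a'*a + c'*b = 1 ∧ b'*a + d'*b = 0 ∧ a'*c + c'*d = 0 ∧ b'*c + d'*d = 1 ∧
      p' + a'*p + c'*q = 0 ∧ q' + b'*p + d'*q = 0 ∧
      a*a' + c*b' = 1 ∧ b*a' + d*b' = 0 ∧ a*c' + c*d' = 0 ∧ b*c' + d*d' = 1 ∧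
      p + a*p' + c*q' = 0 ∧ q + b*p' + d*q' = 0 := by
  set g : ℤ := (Int.gcd ℓ m : ℤ) with hg
  have hg0 : g ≠ 0 := by
    simp only [hg, ne_eq, Int.natCast_eq_zero, Int.gcd_eq_zero_iff, not_and]
    exact fun _ => hm
  have hdl : g ∣ ℓ := Int.gcd_dvd_left _ _
  have hdm : g ∣ m := Int.gcd_dvd_right _ _
  have hdl' : g ∣ ℓ' := by rw [hg, hgcd]; exact Int.gcd_dvd_left _ _
  obtain ⟨ℓ₁, F1⟩ := hdl
  obtain ⟨m₁, F2⟩ := hdm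
  obtain ⟨e, F3⟩ := hdl'
  set x := Int.gcdA ℓ m with hx
  set y := Int.gcdB ℓ m with hy
  have F4 : g = ℓ * x + m * y := Int.gcd_eq_gcd_ab ℓ m
  have h1 : x * ℓ₁ + y * m₁ = 1 := by
    have h2 : g * (x * ℓ₁ + y * m₁) = g * 1 := by
      rw [mul_one]; linear_combination (-x) * F1 + (-y) * F2 - F4
    exact mul_left_cancel₀ hg0 h2
  have hgpos : 0 < Int.gcd ℓ' m := Int.gcd_pos_of_ne_zero_right _ hm
  have hcop_e : Int.gcd e m₁ = 1 := by
    have := Int.gcd_div_gcd_div_gcd (i := ℓ') (j := m) hgpos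
    have he' : ℓ' / (Int.gcd ℓ' m : ℤ) = e := by
      rw [← hgcd, ← hg, F3]; exact Int.mul_ediv_cancel_left e hg0
    have hm' : m / (Int.gcd ℓ' m : ℤ) = m₁ := by
      rw [← hgcd, ← hg, F2]; exact Int.mul_ediv_cancel_left m₁ hg0
    rwa [he', hm'] at this
  have hxcop : IsCoprime x m₁ := ⟨ℓ₁, y, by linear_combination h1⟩
  have hecop : IsCoprime e m₁ := Int.isCoprime_iff_gcd_eq_one.mpr hcop_e
  obtain ⟨D, C2, F5⟩ := hxcop.mul_left hecop
  -- F5 : D * (x * e) + C2 * m₁ = 1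
  have E1 : (x*e)*ℓ + (y*e)*m = ℓ' := by linear_combination (-e) * F4 - F3
  have E2 : m₁*ℓ + (-ℓ₁)*m = 0 := by linear_combination m₁ * F1 - ℓ₁ * F2
  refine ⟨x*e, m₁, -C2, D, y*e, -ℓ₁, D, -m₁, C2, x*e,
    C2*ℓ₁ - D*(y*e), m₁*(y*e) + (x*e)*ℓ₁, ?_, ?_, ?_, ?_, ?_, ?_, ?_, ?_,
    ?_, ?_, ?_, ?_, ?_, ?_, ?_, ?_⟩
  · linear_combination E1
  · linear_combination E2
  · linear_combination (-D) * E1 + (-C2) * E2 + ℓ * F5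
  · linear_combination m₁ * E1 + (-(x*e)) * E2
  · linear_combination F5
  · ring
  · ring
  · linear_combination F5
  · ring
  · ring
  · linear_combination F5
  · ring
  · ring
  · linear_combination F5
  · linear_combination (-(y*e)) * F5
  · linear_combination ℓ₁ * F5

set_option linter.unusedVariables false
set_option linter.unusedSectionVars false
set_option maxHeartbeats 1000000
set_option synthInstance.maxHeartbeats 400000

noncomputable section LCyl2

section PREV
end PREV

variable {S : Type*} [CommRing S] [Algebra ℂ S]

lemma Epow_Epow (t u : Sˣ) (v w z : ℤ × ℤ) :
    Epow (Epow t u v) (Epow t u w) z = Epow t u (z.1 • v + z.2 • w) := by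
  rw [Epow_add, Epow_zsmul, Epow_zsmul]; rfl

lemma algHom_val_zpow {S₂ : Type*} [CommRing S₂] [Algebra ℂ S₂] (g : S →ₐ[ℂ] S₂)
    (w : Sˣ) (n : ℤ) :
    g ↑(w ^ n) = ↑(Units.map (g : S →* S₂) w ^ n) := by
  rw [← map_zpow, Units.coe_map]; rfl

section Main

variable {A : Type*} [CommRing A] [Algebra ℂ A] (𝒜 : ℤ → Submodule ℂ A) [GradedAlgebra 𝒜]

abbrev SRing (f : A) (ℓ : ℤ) : Type _ :=
  LaurentPolynomial (LaurentPolynomial A ⧸ Ideal.span {T ℓ * C f - 1})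

/-- The canonical map `A[T,T⁻¹] → R_{f,ℓ}[U,U⁻¹]`. -/
def cmk (f : A) (ℓ : ℤ) : LaurentPolynomial A →ₐ[ℂ] SRing f ℓ :=
  CAlgHom.comp (Ideal.Quotient.mkₐ ℂ (Ideal.span {T ℓ * C f - 1}))

lemma cmk_apply (f : A) (ℓ : ℤ) (z : LaurentPolynomial A) :
    cmk f ℓ z = C (Ideal.Quotient.mk _ z) := rfl

def tS (f : A) (ℓ : ℤ) : (SRing f ℓ)ˣ :=
  Units.map (cmk f ℓ : LaurentPolynomial A →* SRing f ℓ) TUnit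

def uS (f : A) (ℓ : ℤ) : (SRing f ℓ)ˣ := TUnit

lemma tS_zpow (f : A) (ℓ : ℤ) (n : ℤ) :
    ((tS f ℓ ^ n : (SRing f ℓ)ˣ) : SRing f ℓ) = cmk f ℓ (T n) := by
  have h : tS f ℓ ^ n = Units.map (cmk f ℓ : LaurentPolynomial A →* SRing f ℓ) (TUnit ^ n) :=
    (map_zpow _ _ _).symm
  rw [h, Units.coe_map, TUnit_zpow]; rfl

lemma uS_zpow (f : A) (ℓ : ℤ) (n : ℤ) :
    ((uS f ℓ ^ n : (SRing f ℓ)ˣ) : SRing f ℓ) = T n := TUnit_zpow n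

def EE (f : A) (ℓ : ℤ) (v : ℤ × ℤ) : (SRing f ℓ)ˣ := Epow (S := SRing f ℓ) (tS f ℓ) (uS f ℓ) v

lemma EE_val (f : A) (ℓ : ℤ) (i j : ℤ) :
    ((EE f ℓ (i, j) : (SRing f ℓ)ˣ) : SRing f ℓ) = cmk f ℓ (T i) * T j := by
  show ((tS f ℓ ^ i * uS f ℓ ^ j : (SRing f ℓ)ˣ) : SRing f ℓ) = _
  rw [Units.val_mul, tS_zpow, uS_zpow]

lemma EE_mul (f : A) (ℓ : ℤ) (v w : ℤ × ℤ) :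
    EE f ℓ v * EE f ℓ w = EE f ℓ (v + w) := (Epow_add _ _ _ _).symm

lemma EE_one_zero (f : A) (ℓ : ℤ) : EE f ℓ (1, 0) = tS f ℓ := by
  show tS f ℓ ^ (1 : ℤ) * uS f ℓ ^ (0 : ℤ) = _
  rw [zpow_one, zpow_zero, mul_one]

lemma EE_zero_one (f : A) (ℓ : ℤ) : EE f ℓ (0, 1) = uS f ℓ := by
  show tS f ℓ ^ (0 : ℤ) * uS f ℓ ^ (1 : ℤ) = _
  rw [zpow_zero, zpow_one, one_mul]

lemma cmk_rel (f : A) (ℓ : ℤ) : cmk f ℓ (T ℓ * C f) = 1 := by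
  rw [cmk_apply]
  have h0 : (Ideal.Quotient.mk (Ideal.span {T ℓ * C f - 1})) (T ℓ * C f - 1) = 0 :=
    Ideal.Quotient.eq_zero_iff_mem.mpr (Ideal.mem_span_singleton_self _)
  rw [map_sub, sub_eq_zero] at h0
  rw [h0, map_one, map_one]

def canonA (f : A) (ℓ : ℤ) : A →ₐ[ℂ] SRing f ℓ := (cmk f ℓ).comp CAlgHom

lemma canonA_apply (f : A) (ℓ : ℤ) (x : A) : canonA f ℓ x = cmk f ℓ (C x) := rfl

/-- The lift `A[T,T⁻¹] → R_{f,ℓ'}[U,U⁻¹]` twisting by the grading. -/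
def innerH (f : A) (ℓ' : ℤ) (a b p q : ℤ) : LaurentPolynomial A →ₐ[ℂ] SRing f ℓ' :=
  lpAH (S := SRing f ℓ') (B := A) (twistHom (S := SRing f ℓ') 𝒜 (canonA f ℓ') (EE f ℓ' (p, q))) (EE f ℓ' (a, b))

lemma innerH_C_of_mem (f : A) (ℓ' : ℤ) (a b p q : ℤ) {k : ℤ} {x : A} (hx : x ∈ 𝒜 k) :
    innerH 𝒜 f ℓ' a b p q (C x) = canonA f ℓ' x * ↑(EE f ℓ' (p, q) ^ k) := by
  rw [innerH, lpAH_C, twistHom_of_mem 𝒜 _ _ hx]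

lemma innerH_T (f : A) (ℓ' : ℤ) (a b p q : ℤ) (n : ℤ) :
    innerH 𝒜 f ℓ' a b p q (T n) = ↑(EE f ℓ' (a, b) ^ n) := lpAH_T _ _ n

lemma innerH_rel (f : A) (m : ℤ) (hf : f ∈ 𝒜 m) (ℓ ℓ' : ℤ) (a b p q : ℤ)
    (h1 : a * ℓ + p * m = ℓ') (h2 : b * ℓ + q * m = 0) :
    innerH 𝒜 f ℓ' a b p q (T ℓ * C f - 1) = 0 := by
  rw [map_sub, map_mul, innerH_T, innerH_C_of_mem 𝒜 f ℓ' a b p q hf, map_one]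
  have hE : EE f ℓ' (a, b) ^ ℓ * EE f ℓ' (p, q) ^ m = EE f ℓ' (ℓ', 0) := by
    rw [EE, EE, EE, ← Epow_zsmul, ← Epow_zsmul, ← Epow_add]
    congr 1
    show (ℓ * a + m * p, ℓ * b + m * q) = (ℓ', 0)
    simp only [Prod.mk.injEq]
    constructor <;> linarith
  calc (↑(EE f ℓ' (a, b) ^ ℓ) : SRing f ℓ') * (canonA f ℓ' f * ↑(EE f ℓ' (p, q) ^ m)) - 1
      = canonA f ℓ' f * ↑(EE f ℓ' (a, b) ^ ℓ * EE f ℓ' (p, q) ^ m) - 1 := by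
        rw [Units.val_mul]; ring
    _ = canonA f ℓ' f * ↑(EE f ℓ' (ℓ', 0)) - 1 := by rw [hE]
    _ = 0 := by
        rw [EE_val, T_zero, mul_one, canonA_apply, ← map_mul, mul_comm (C f) (T ℓ'),
          cmk_rel, sub_self]

/-- The main hom `R_{f,ℓ}[U,U⁻¹] → R_{f,ℓ'}[U,U⁻¹]`. -/
def bigH (f : A) (m : ℤ) (ℓ ℓ' : ℤ) (a b c d p q : ℤ) (hf : f ∈ 𝒜 m)
    (h1 : a * ℓ + p * m = ℓ') (h2 : b * ℓ + q * m = 0) :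
    SRing f ℓ →ₐ[ℂ] SRing f ℓ' :=
  lpAH (S := SRing f ℓ') (B := LaurentPolynomial A ⧸ Ideal.span {T ℓ * C f - 1}) (Ideal.Quotient.liftₐ _ (innerH 𝒜 f ℓ' a b p q) (by
    intro z hz
    rw [Ideal.mem_span_singleton] at hz
    obtain ⟨w, rfl⟩ := hz
    rw [map_mul, innerH_rel 𝒜 f m hf ℓ ℓ' a b p q h1 h2, zero_mul]))
  (EE f ℓ' (c, d))

lemma bigH_cmk (f : A) (m : ℤ) (ℓ ℓ' : ℤ) (a b c d p q : ℤ) (hf : f ∈ 𝒜 m)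
    (h1 : a * ℓ + p * m = ℓ') (h2 : b * ℓ + q * m = 0) (z : LaurentPolynomial A) :
    bigH 𝒜 f m ℓ ℓ' a b c d p q hf h1 h2 (cmk f ℓ z) = innerH 𝒜 f ℓ' a b p q z := by
  rw [cmk_apply, bigH, lpAH_C, Ideal.Quotient.liftₐ_apply]
  rfl

lemma bigH_T (f : A) (m : ℤ) (ℓ ℓ' : ℤ) (a b c d p q : ℤ) (hf : f ∈ 𝒜 m)
    (h1 : a * ℓ + p * m = ℓ') (h2 : b * ℓ + q * m = 0) (n : ℤ) :
    bigH 𝒜 f m ℓ ℓ' a b c d p q hf h1 h2 (T n) = ↑(EE f ℓ' (c, d) ^ n) := lpAH_T _ _ n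

lemma bigH_map_tS (f : A) (m : ℤ) (ℓ ℓ' : ℤ) (a b c d p q : ℤ) (hf : f ∈ 𝒜 m)
    (h1 : a * ℓ + p * m = ℓ') (h2 : b * ℓ + q * m = 0) :
    Units.map (bigH 𝒜 f m ℓ ℓ' a b c d p q hf h1 h2 : SRing f ℓ →* SRing f ℓ') (tS f ℓ)
      = EE f ℓ' (a, b) := by
  apply Units.ext
  rw [Units.coe_map]
  show bigH 𝒜 f m ℓ ℓ' a b c d p q hf h1 h2 ↑(tS f ℓ) = ↑(EE f ℓ' (a, b))
  have h : ((tS f ℓ : (SRing f ℓ)ˣ) : SRing f ℓ) = cmk f ℓ (T 1) := by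
    rw [← tS_zpow f ℓ 1, zpow_one]
  rw [h, bigH_cmk, innerH_T, zpow_one]

lemma bigH_map_uS (f : A) (m : ℤ) (ℓ ℓ' : ℤ) (a b c d p q : ℤ) (hf : f ∈ 𝒜 m)
    (h1 : a * ℓ + p * m = ℓ') (h2 : b * ℓ + q * m = 0) :
    Units.map (bigH 𝒜 f m ℓ ℓ' a b c d p q hf h1 h2 : SRing f ℓ →* SRing f ℓ') (uS f ℓ)
      = EE f ℓ' (c, d) := by
  apply Units.ext
  rw [Units.coe_map]
  show bigH 𝒜 f m ℓ ℓ' a b c d p q hf h1 h2 ↑(uS f ℓ) = ↑(EE f ℓ' (c, d))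
  have h : ((uS f ℓ : (SRing f ℓ)ˣ) : SRing f ℓ) = (T 1 : SRing f ℓ) := rfl
  rw [h, bigH_T, zpow_one]

lemma bigH_map_EE (f : A) (m : ℤ) (ℓ ℓ' : ℤ) (a b c d p q : ℤ) (hf : f ∈ 𝒜 m)
    (h1 : a * ℓ + p * m = ℓ') (h2 : b * ℓ + q * m = 0) (v : ℤ × ℤ) :
    Units.map (bigH 𝒜 f m ℓ ℓ' a b c d p q hf h1 h2 : SRing f ℓ →* SRing f ℓ') (EE f ℓ v)
      = EE f ℓ' (v.1 • (a, b) + v.2 • (c, d)) := by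
  rw [EE, map_Epow (S := SRing f ℓ) (S₂ := SRing f ℓ'), bigH_map_tS, bigH_map_uS]
  simp only [EE]
  rw [Epow_Epow]

theorem bigH_comp_id (f : A) (m : ℤ) (hf : f ∈ 𝒜 m) (ℓ ℓ' : ℤ)
    (a b c d p q a' b' c' d' p' q' : ℤ)
    (h1 : a * ℓ + p * m = ℓ') (h2 : b * ℓ + q * m = 0)
    (h1' : a' * ℓ' + p' * m = ℓ) (h2' : b' * ℓ' + q' * m = 0)
    (e1 : a' * a + c' * b = 1) (e2 : b' * a + d' * b = 0)
    (e3 : a' * c + c' * d = 0) (e4 : b' * c + d' * d = 1)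
    (e5 : p' + a' * p + c' * q = 0) (e6 : q' + b' * p + d' * q = 0) :
    (bigH 𝒜 f m ℓ' ℓ a' b' c' d' p' q' hf h1' h2').comp
      (bigH 𝒜 f m ℓ ℓ' a b c d p q hf h1 h2) = AlgHom.id ℂ (SRing f ℓ) := by
  set M := bigH 𝒜 f m ℓ ℓ' a b c d p q hf h1 h2 with hM
  set N := bigH 𝒜 f m ℓ' ℓ a' b' c' d' p' q' hf h1' h2' with hN
  have inner_eq : ∀ z : LaurentPolynomial A,
      N (innerH 𝒜 f ℓ' a b p q z) = cmk f ℓ z := by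
    have key : N.toRingHom.comp (innerH 𝒜 f ℓ' a b p q).toRingHom = (cmk f ℓ).toRingHom := by
      refine AddMonoidAlgebra.ringHom_ext (fun x => ?_) (fun n => ?_)
      · -- coefficients : homogeneous induction
        refine ringHom_ext_homogeneous 𝒜 (S₂ := SRing f ℓ)
          (g₁ := (N.toRingHom.comp (innerH 𝒜 f ℓ' a b p q).toRingHom).comp
            (C : A →+* LaurentPolynomial A))
          (g₂ := (cmk f ℓ).toRingHom.comp (C : A →+* LaurentPolynomial A))
          (fun k x hx => ?_) x
        show N (innerH 𝒜 f ℓ' a b p q (C x)) = cmk f ℓ (C x)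
        rw [innerH_C_of_mem 𝒜 f ℓ' a b p q hx, map_mul, canonA_apply, hN,
          bigH_cmk 𝒜 f m ℓ' ℓ a' b' c' d' p' q' hf h1' h2',
          innerH_C_of_mem 𝒜 f ℓ a' b' p' q' hx,
          algHom_val_zpow (S := SRing f ℓ') (S₂ := SRing f ℓ), bigH_map_EE 𝒜 f m ℓ' ℓ a' b' c' d' p' q' hf h1' h2',
          mul_assoc, ← Units.val_mul, ← (show Commute (EE f ℓ (p', q'))
            (EE f ℓ ((p, q).1 • (a', b') + (p, q).2 • (c', d'))) from
            by
              show _ = _; apply Units.ext; rw [Units.val_mul, Units.val_mul]; exact mul_comm (G := SRing f ℓ) _ _).mul_zpow k, EE_mul]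
        have hv : ((p', q') : ℤ × ℤ) +
            (((p, q) : ℤ × ℤ).1 • ((a', b') : ℤ × ℤ) + ((p, q) : ℤ × ℤ).2 • ((c', d') : ℤ × ℤ))
            = (0 : ℤ × ℤ) := by
          simp only [Prod.ext_iff, Prod.fst_add, Prod.snd_add, Prod.smul_fst, Prod.smul_snd,
            smul_eq_mul, Prod.fst_zero, Prod.snd_zero]
          constructor <;> linarith
        rw [hv]
        have hone : EE f ℓ (0 : ℤ × ℤ) = 1 := Epow_zero _ _
        rw [hone, one_zpow, Units.val_one, mul_one, canonA_apply]
      · show N (innerH 𝒜 f ℓ' a b p q (T n)) = cmk f ℓ (T n)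
        rw [innerH_T, algHom_val_zpow (S := SRing f ℓ') (S₂ := SRing f ℓ), hN, bigH_map_EE 𝒜 f m ℓ' ℓ a' b' c' d' p' q' hf h1' h2']
        have hv : (((a, b) : ℤ × ℤ).1 • ((a', b') : ℤ × ℤ)
            + ((a, b) : ℤ × ℤ).2 • ((c', d') : ℤ × ℤ)) = ((1 : ℤ), (0 : ℤ)) := by
          simp only [Prod.ext_iff, Prod.fst_add, Prod.snd_add, Prod.smul_fst, Prod.smul_snd,
            smul_eq_mul, Prod.mk.injEq]
          constructor <;> linarith
        rw [hv, EE_one_zero, tS_zpow]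
    intro z
    exact RingHom.congr_fun key z
  have key2 : (N.comp M).toRingHom = RingHom.id (SRing f ℓ) := by
    refine AddMonoidAlgebra.ringHom_ext (fun r => ?_) (fun n => ?_)
    · obtain ⟨z, rfl⟩ := Ideal.Quotient.mk_surjective r
      show N (M (C (Ideal.Quotient.mk _ z))) = C (Ideal.Quotient.mk _ z)
      rw [← cmk_apply, hM, bigH_cmk 𝒜 f m ℓ ℓ' a b c d p q hf h1 h2]
      exact inner_eq z
    · show N (M (T n)) = T n
      rw [hM, bigH_T, algHom_val_zpow (S := SRing f ℓ') (S₂ := SRing f ℓ), hN, bigH_map_EE 𝒜 f m ℓ' ℓ a' b' c' d' p' q' hf h1' h2']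
      have hv : (((c, d) : ℤ × ℤ).1 • ((a', b') : ℤ × ℤ)
          + ((c, d) : ℤ × ℤ).2 • ((c', d') : ℤ × ℤ)) = ((0 : ℤ), (1 : ℤ)) := by
        simp only [Prod.ext_iff, Prod.fst_add, Prod.snd_add, Prod.smul_fst, Prod.smul_snd,
          smul_eq_mul, Prod.mk.injEq]
        constructor <;> linarith
      rw [hv, EE_zero_one]
      exact uS_zpow f ℓ n
  exact AlgHom.ext fun x => RingHom.congr_fun key2 x

end Main

end LCyl2

/-- **Proposition 1(2).** Let `A` be a commutative `ℂ`-algebra with a `ℤ`-grading `𝒜`,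
let `m ≠ 0` and let `f ∈ A` be homogeneous of degree `m`.  If `ℓ, ℓ' ≥ 1` satisfy
`gcd(ℓ, m) = gcd(ℓ', m)`, then the `ℂ*`-cylinders over the hypersurfaces `{T^ℓ f = 1}`
and `{T^ℓ' f = 1}` are isomorphic, i.e. the Laurent polynomial rings over
`R_{f,ℓ} = A[T,T⁻¹]/(T^ℓ f - 1)` and `R_{f,ℓ'} = A[T,T⁻¹]/(T^ℓ' f - 1)` are
isomorphic as `ℂ`-algebras. -/
theorem laurent_cylinders_iso_of_gcd_eq {A : Type*} [CommRing A] [Algebra ℂ A]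
    (𝒜 : ℤ → Submodule ℂ A) [GradedAlgebra 𝒜]
    (m : ℤ) (hm : m ≠ 0) (f : A) (hf : f ∈ 𝒜 m)
    (ℓ ℓ' : ℤ) (hℓ : 1 ≤ ℓ) (hℓ' : 1 ≤ ℓ')
    (hgcd : Int.gcd ℓ m = Int.gcd ℓ' m) :
    Nonempty ((LaurentPolynomial (LaurentPolynomial A ⧸ Ideal.span {T ℓ * C f - 1})) ≃ₐ[ℂ]
      (LaurentPolynomial (LaurentPolynomial A ⧸ Ideal.span {T ℓ' * C f - 1}))) := by
  obtain ⟨a, b, c, d, p, q, a', b', c', d', p', q',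
    h1, h2, h1', h2', e1, e2, e3, e4, e5, e6, e1', e2', e3', e4', e5', e6'⟩ :=
    exists_matrix m ℓ ℓ' hm hgcd
  exact ⟨AlgEquiv.ofAlgHom
    (bigH 𝒜 f m ℓ ℓ' a b c d p q hf h1 h2)
    (bigH 𝒜 f m ℓ' ℓ a' b' c' d' p' q' hf h1' h2')
    (bigH_comp_id 𝒜 f m hf ℓ' ℓ a' b' c' d' p' q' a b c d p q h1' h2' h1 h2
      e1' e2' e3' e4' e5' e6')
    (bigH_comp_id 𝒜 f m hf ℓ ℓ' a b c d p q a' b' c' d' p' q' h1 h2 h1' h2'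
      e1 e2 e3 e4 e5 e6)⟩
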